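/- Let R be a commutative ring. If Pic(R') is a torsion group for every finite and finitely presented R-algebra R', then Pic(R') is a torsion group for every R-algebra R' that is integral over R. -/

import Mathlib

open scoped TensorProduct

/-- A module is invertible (of rank one) if it is finitely generated, projective, and has
a tensor inverse. -/
def IsInvertibleModule (R : Type) [CommRing R] (M : Type) [AddCommGroup M] [Module R M] :
    Prop :=
  Module.Finite R M ∧ Module.Projective R M ∧
    ∃ (N : Type) (_ : AddCommGroup N) (_ : Module R N),
      Nonempty ((M ⊗[R] N) ≃ₗ[R] R)

/-- The Picard group of R is torsion: every invertible R-module has a tensor power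
isomorphic to R. -/
def PicIsTorsion (R : Type) [CommRing R] : Prop :=
  ∀ (M : Type) (_ : AddCommGroup M) (_ : Module R M), IsInvertibleModule R M →
    ∃ n : ℕ, 0 < n ∧ Nonempty ((⨂[R] _ : Fin n, M) ≃ₗ[R] R)

open TensorProduct



section Scalars
variable {S M N : Type*} [CommRing S] [AddCommGroup M] [AddCommGroup N]
  [Module S M] [Module S N]

theorem tmul_eq_smul_inv (φ : (M ⊗[S] N) ≃ₗ[S] S) (z : M ⊗[S] N) :
    z = φ z • φ.symm 1 := by
  apply φ.injective
  rw [map_smul, φ.apply_symm_apply, smul_eq_mul, mul_one]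

variable {ι : Type*} [Fintype ι]

/-- auxiliary bilinear map -/
noncomputable def auxL (φ : (M ⊗[S] N) ≃ₗ[S] S) (c : M) (d : N) :
    M ⊗[S] N →ₗ[S] S :=
  TensorProduct.lift (LinearMap.mk₂ S (fun a b => φ (a ⊗ₜ d) * φ (c ⊗ₜ b))
    (fun a a' b => by simp only [add_tmul, map_add, add_mul])
    (fun s a b => by simp only [← smul_tmul', map_smul, smul_eq_mul]; ring)
    (fun a b b' => by simp only [tmul_add, map_add, mul_add])
    (fun s a b => by simp only [tmul_smul, map_smul, smul_eq_mul]; ring))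

@[simp] theorem auxL_tmul (φ : (M ⊗[S] N) ≃ₗ[S] S) (c a : M) (d b : N) :
    auxL φ c d (a ⊗ₜ b) = φ (a ⊗ₜ d) * φ (c ⊗ₜ b) := rfl

theorem ident1 (φ : (M ⊗[S] N) ≃ₗ[S] S) (a c : M) (b d : N) :
    φ (a ⊗ₜ d) * φ (c ⊗ₜ b) = φ (a ⊗ₜ b) * auxL φ c d (φ.symm 1) := by
  have h := congrArg (auxL φ c d) (tmul_eq_smul_inv φ (a ⊗ₜ b))
  rw [auxL_tmul, map_smul, smul_eq_mul] at h
  exact h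

/-- The key "swap" identity: any tensor-inverse pairing is symmetric in this sense. -/
theorem key_swap (φ : (M ⊗[S] N) ≃ₗ[S] S) (m : ι → M) (n : ι → N)
    (hu : φ.symm 1 = ∑ i, m i ⊗ₜ[S] n i) (a c : M) (b d : N) :
    φ (a ⊗ₜ d) * φ (c ⊗ₜ b) = φ (a ⊗ₜ b) * φ (c ⊗ₜ d) := by
  classical
  -- the defect unit v
  set u := φ.symm 1 with hudef
  have hφu : φ u = 1 := φ.apply_symm_apply 1
  -- w (c ⊗ d) = auxL φ c d u, as a linear map in c ⊗ d
  have hw : ∀ c d, auxL φ c d u = auxL φ c d (∑ i, m i ⊗ₜ[S] n i) := by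
    intro c d; rw [← hu]
  have hsum : ∀ (c : M) (d : N), auxL φ c d u = ∑ i, φ (m i ⊗ₜ d) * φ (c ⊗ₜ n i) := by
    intro c d; rw [hw, map_sum]; simp
  set w : M ⊗[S] N →ₗ[S] S :=
    TensorProduct.lift (LinearMap.mk₂ S (fun c d => ∑ i, φ (m i ⊗ₜ d) * φ (c ⊗ₜ n i))
      (fun c c' d => by
        simp only [add_tmul, map_add, mul_add, add_mul, ← Finset.sum_add_distrib])
      (fun s c d => by
        simp only [← smul_tmul', map_smul, smul_eq_mul, Finset.mul_sum]
        exact Finset.sum_congr rfl (fun i _ => by ring))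
      (fun c d d' => by
        simp only [tmul_add, map_add, mul_add, add_mul, ← Finset.sum_add_distrib])
      (fun s c d => by
        simp only [tmul_smul, ← smul_tmul', map_smul, smul_eq_mul, Finset.mul_sum]
        exact Finset.sum_congr rfl (fun i _ => by ring)))
    with hwdef
  have hw_tmul : ∀ (c : M) (d : N), w (c ⊗ₜ d) = auxL φ c d u := by
    intro c d; rw [hsum]; rfl
  set v := w u with hvdef
  -- the twisted identity
  have ident2 : ∀ (a c : M) (b d : N),
      φ (a ⊗ₜ d) * φ (c ⊗ₜ b) = φ (a ⊗ₜ b) * (φ (c ⊗ₜ d) * v) := by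
    intro a c b d
    rw [ident1 φ a c b d, ← hw_tmul]
    congr 1
    have h := congrArg w (tmul_eq_smul_inv φ (c ⊗ₜ d))
    rw [map_smul, smul_eq_mul] at h
    exact h
  -- now show v = 1 by a nilpotency argument
  have hv : v = 1 := by
    have hd2 : ∀ i, (φ (m i ⊗ₜ n i) * φ (m i ⊗ₜ n i)) * (1 - v) = 0 := by
      intro i
      have h := ident2 (m i) (m i) (n i) (n i)
      linear_combination h
    have hdsum : ∑ i, φ (m i ⊗ₜ[S] n i) = 1 := by
      have : φ (∑ i, m i ⊗ₜ[S] n i) = 1 := by rw [← hu]; exact hφu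
      rw [map_sum] at this; exact this
    -- ideal of annihilators of y
    set I : Ideal S := LinearMap.ker (LinearMap.toSpanSingleton S S (1 - v)) with hI
    have hmemI : ∀ s : S, s ∈ I ↔ s * (1 - v) = 0 := by
      intro s
      simp [hI, LinearMap.mem_ker, LinearMap.toSpanSingleton_apply, smul_eq_mul]
    have hq : ∀ i, IsNilpotent (Ideal.Quotient.mk I (φ (m i ⊗ₜ[S] n i))) := by
      intro i
      refine ⟨2, ?_⟩
      rw [← map_pow, Ideal.Quotient.eq_zero_iff_mem, hmemI, pow_two]
      exact hd2 i
    have hone : IsNilpotent (1 : S ⧸ I) := by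
      have : (1 : S ⧸ I) = ∑ i, Ideal.Quotient.mk I (φ (m i ⊗ₜ[S] n i)) := by
        rw [← map_sum, hdsum, map_one]
      rw [this]
      exact isNilpotent_sum (fun i _ => hq i)
    have h1 : (1 : S ⧸ I) = 0 := by
      obtain ⟨k, hk⟩ := hone
      rw [one_pow] at hk
      exact hk
    have : (1 : S) ∈ I := by
      rw [← Ideal.Quotient.eq_zero_iff_mem]
      exact h1
    rw [hmemI, one_mul] at this
    exact (sub_eq_zero.mp this).symm
  calc φ (a ⊗ₜ d) * φ (c ⊗ₜ b) = φ (a ⊗ₜ b) * (φ (c ⊗ₜ d) * v) := ident2 a c b d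
    _ = φ (a ⊗ₜ b) * φ (c ⊗ₜ d) := by rw [hv, mul_one]

end Scalars

section DualBasis
variable {S M N : Type*} [CommRing S] [AddCommGroup M] [AddCommGroup N]
  [Module S M] [Module S N]
variable {ι : Type*} [Fintype ι]

theorem dual_basis (φ : (M ⊗[S] N) ≃ₗ[S] S) (m : ι → M) (n : ι → N)
    (hu : φ.symm 1 = ∑ i, m i ⊗ₜ[S] n i)
    (hswap : ∀ (a c : M) (b d : N),
      φ (a ⊗ₜ d) * φ (c ⊗ₜ b) = φ (a ⊗ₜ b) * φ (c ⊗ₜ d))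
    (hF1 : ∀ z : M ⊗[S] N, z = φ z • φ.symm 1)
    (m₀ : M) : ∑ i, φ (m₀ ⊗ₜ n i) • m i = m₀ := by
  classical
  have hφu : φ (φ.symm 1) = 1 := φ.apply_symm_apply 1
  have hdsum : ∑ i, φ (m i ⊗ₜ[S] n i) = 1 := by
    have : φ (∑ i, m i ⊗ₜ[S] n i) = 1 := by rw [← hu]; exact hφu
    rwa [map_sum] at this
  set z := (∑ i, φ (m₀ ⊗ₜ n i) • m i) - m₀ with hz
  -- scalar computation: φ (z ⊗ₜ n₀) = 0
  have hscal : ∀ n₀ : N, φ (z ⊗ₜ n₀) = 0 := by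
    intro n₀
    rw [hz, sub_tmul, map_sub, sum_tmul, map_sum]
    have : ∑ i, φ ((φ (m₀ ⊗ₜ n i) • m i) ⊗ₜ[S] n₀) = φ (m₀ ⊗ₜ n₀) := by
      calc ∑ i, φ ((φ (m₀ ⊗ₜ n i) • m i) ⊗ₜ[S] n₀)
          = ∑ i, φ (m₀ ⊗ₜ n i) * φ (m i ⊗ₜ[S] n₀) := by
            simp [← smul_tmul', map_smul, smul_eq_mul]
        _ = ∑ i, φ (m₀ ⊗ₜ n₀) * φ (m i ⊗ₜ[S] n i) := by
            exact Finset.sum_congr rfl (fun i _ => hswap m₀ (m i) n₀ (n i))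
        _ = φ (m₀ ⊗ₜ n₀) := by rw [← Finset.mul_sum, hdsum, mul_one]
    rw [this, sub_self]
  have hztmul : ∀ n₀ : N, z ⊗ₜ[S] n₀ = (0 : M ⊗[S] N) := by
    intro n₀
    rw [hF1 (z ⊗ₜ n₀), hscal n₀, zero_smul]
  -- the twist map
  let Φt : ((M ⊗[S] N) ⊗[S] M) ≃ₗ[S] ((M ⊗[S] N) ⊗[S] M) :=
    (TensorProduct.assoc S M N M).trans
      ((TensorProduct.congr (LinearEquiv.refl S M) (TensorProduct.comm S N M)).trans
        (TensorProduct.comm S M (M ⊗[S] N)))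
  have hΦt : ∀ (a : M) (b : N) (c : M), Φt ((a ⊗ₜ b) ⊗ₜ c) = (c ⊗ₜ b) ⊗ₜ a := by
    intro a b c; simp [Φt]
  -- the contraction map
  let W : ((M ⊗[S] N) ⊗[S] M) →ₗ[S] M :=
    TensorProduct.lift
      { toFun := fun zz => φ zz • (LinearMap.id : M →ₗ[S] M)
        map_add' := fun x y => by simp [add_smul]
        map_smul' := fun s x => by simp [smul_smul] }
  have hW : ∀ (zz : M ⊗[S] N) (c : M), W (zz ⊗ₜ c) = φ zz • c := by
    intro zz c; simp [W]
  have hkey : φ.symm 1 ⊗ₜ[S] z = (0 : (M ⊗[S] N) ⊗[S] M) := by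
    apply Φt.injective
    rw [map_zero, hu, sum_tmul, map_sum]
    calc ∑ i, Φt ((m i ⊗ₜ n i) ⊗ₜ z) = ∑ i, ((z ⊗ₜ n i) ⊗ₜ[S] m i) := by
          exact Finset.sum_congr rfl (fun i _ => hΦt (m i) (n i) z)
      _ = 0 := by
          refine Finset.sum_eq_zero (fun i _ => ?_)
          rw [hztmul (n i), zero_tmul]
  have : z = 0 := by
    have h1 : W (φ.symm 1 ⊗ₜ z) = z := by rw [hW, hφu, one_smul]
    rw [hkey, map_zero] at h1
    exact h1.symm
  have := sub_eq_zero.mp (hz ▸ this)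
  exact this
end DualBasis

section MatrixModule
variable {A : Type} [CommRing A] {ι : Type} [Fintype ι] [DecidableEq ι]

theorem pi_single_expand (v : ι → A) : v = ∑ a : ι, v a • (Pi.single a 1 : ι → A) := by
  funext b
  simp [Pi.single_apply, Finset.sum_apply]

theorem tensor_coords (v w : ι → A) :
    v ⊗ₜ[A] w = ∑ a : ι, ∑ b : ι,
      (v a * w b) • ((Pi.single a 1 : ι → A) ⊗ₜ[A] (Pi.single b 1 : ι → A)) := by
  conv_lhs => rw [pi_single_expand v, pi_single_expand w]
  rw [sum_tmul]
  refine Finset.sum_congr rfl (fun a _ => ?_)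
  rw [← smul_tmul', tmul_sum, Finset.smul_sum]
  refine Finset.sum_congr rfl (fun b _ => ?_)
  rw [tmul_smul, smul_smul]

variable (C : Matrix ι ι A)

theorem matrix_invertible (htr : ∑ i, C i i = 1)
    (hsw : ∀ i j k l, C i j * C k l = C i l * C k j) :
    Module.Finite A (LinearMap.range C.mulVecLin) ∧
    Module.Projective A (LinearMap.range C.mulVecLin) ∧
    Nonempty ((↥(LinearMap.range C.mulVecLin) ⊗[A] ↥(LinearMap.range C.transpose.mulVecLin))
      ≃ₗ[A] A) := by
  classical
  have hCC : C * C = C := by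
    ext i j
    rw [Matrix.mul_apply]
    calc ∑ k, C i k * C k j = ∑ k, C i j * C k k :=
          Finset.sum_congr rfl (fun k _ => hsw i k k j)
      _ = C i j := by rw [← Finset.mul_sum, htr, mul_one]
  have hTT : C.transpose * C.transpose = C.transpose := by
    rw [← Matrix.transpose_mul, hCC]
  set P := LinearMap.range C.mulVecLin with hPdef
  set Q := LinearMap.range C.transpose.mulVecLin with hQdef
  have hfixP : ∀ x : ι → A, x ∈ P → C.mulVec x = x := by
    rintro x ⟨y, rfl⟩
    show C.mulVec (C.mulVecLin y) = _
    simp only [Matrix.mulVecLin_apply, Matrix.mulVec_mulVec, hCC]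
  have hfixQ : ∀ x : ι → A, x ∈ Q → C.transpose.mulVec x = x := by
    rintro x ⟨y, rfl⟩
    show C.transpose.mulVec (C.transpose.mulVecLin y) = _
    simp only [Matrix.mulVecLin_apply, Matrix.mulVec_mulVec, hTT]
  -- retraction
  have hcoP : ∀ x : ι → A, C.mulVecLin x ∈ P := fun x => LinearMap.mem_range_self _ x
  have hcoQ : ∀ x : ι → A, C.transpose.mulVecLin x ∈ Q := fun x => LinearMap.mem_range_self _ x
  set ρP : (ι → A) →ₗ[A] P := LinearMap.codRestrict P C.mulVecLin hcoP with hρP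
  set ρQ : (ι → A) →ₗ[A] Q := LinearMap.codRestrict Q C.transpose.mulVecLin hcoQ with hρQ
  have hretP : ρP.comp P.subtype = LinearMap.id := by
    refine LinearMap.ext fun x => Subtype.ext ?_
    show C.mulVecLin x.1 = x.1
    rw [Matrix.mulVecLin_apply]
    exact hfixP x.1 x.2
  have hretQ : ρQ.comp Q.subtype = LinearMap.id := by
    refine LinearMap.ext fun x => Subtype.ext ?_
    show C.transpose.mulVecLin x.1 = x.1
    rw [Matrix.mulVecLin_apply]
    exact hfixQ x.1 x.2
  refine ⟨Module.Finite.range _, Module.Projective.of_split P.subtype ρP hretP, ?_⟩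
  -- columns and rows
  have hcolmem : ∀ j, (fun a => C a j) ∈ P := by
    intro j
    refine ⟨Pi.single j 1, ?_⟩
    funext a
    simp [Matrix.mulVecLin_apply, Matrix.mulVec, dotProduct, Pi.single_apply]
  have hrowmem : ∀ j, (fun b => C j b) ∈ Q := by
    intro j
    refine ⟨Pi.single j 1, ?_⟩
    funext a
    simp [Matrix.mulVecLin_apply, Matrix.mulVec, dotProduct, Pi.single_apply,
      Matrix.transpose_apply]
  set col : ι → P := fun j => ⟨fun a => C a j, hcolmem j⟩ with hcol
  set row : ι → Q := fun j => ⟨fun b => C j b, hrowmem j⟩ with hrow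
  -- the pairing
  set β : (↥P ⊗[A] ↥Q) →ₗ[A] A :=
    TensorProduct.lift (LinearMap.mk₂ A (fun x y => ∑ i, x.1 i * y.1 i)
      (fun x x' y => by simp [add_mul, Finset.sum_add_distrib])
      (fun s x y => by simp [Finset.mul_sum, mul_assoc])
      (fun x y y' => by simp [mul_add, Finset.sum_add_distrib])
      (fun s x y => by simp [Finset.mul_sum, mul_assoc, mul_left_comm])) with hβ
  have hβ_tmul : ∀ (x : P) (y : Q), β (x ⊗ₜ y) = ∑ i, x.1 i * y.1 i := fun x y => rfl
  set ω : ↥P ⊗[A] ↥Q := ∑ i, col i ⊗ₜ row i with hω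
  -- injectivity of inclusion
  set inc : (↥P ⊗[A] ↥Q) →ₗ[A] ((ι → A) ⊗[A] (ι → A)) :=
    TensorProduct.map P.subtype Q.subtype with hinc
  have hinj : Function.Injective inc := by
    have hcmp : (TensorProduct.map ρP ρQ).comp inc = LinearMap.id := by
      rw [hinc, ← TensorProduct.map_comp, hretP, hretQ, TensorProduct.map_id]
    intro x y hxy
    have h2 := congrArg (TensorProduct.map ρP ρQ) hxy
    rwa [← LinearMap.comp_apply, ← LinearMap.comp_apply, hcmp, LinearMap.id_apply,
      LinearMap.id_apply] at h2
  -- coordinates of inc ω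
  have hincω : inc ω = ∑ a : ι, ∑ b : ι,
      (C a b) • ((Pi.single a 1 : ι → A) ⊗ₜ[A] (Pi.single b 1 : ι → A)) := by
    calc inc ω = ∑ i, ((fun a => C a i) ⊗ₜ[A] (fun b => C i b)) := by
          rw [hω, map_sum]
          exact Finset.sum_congr rfl (fun i _ => TensorProduct.map_tmul _ _ _ _)
      _ = ∑ i, ∑ a : ι, ∑ b : ι, (C a i * C i b) •
            ((Pi.single a 1 : ι → A) ⊗ₜ[A] (Pi.single b 1 : ι → A)) := by
          exact Finset.sum_congr rfl (fun i _ => tensor_coords _ _)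
      _ = ∑ a : ι, ∑ b : ι, (C a b) •
            ((Pi.single a 1 : ι → A) ⊗ₜ[A] (Pi.single b 1 : ι → A)) := by
          rw [Finset.sum_comm]
          refine Finset.sum_congr rfl (fun a _ => ?_)
          rw [Finset.sum_comm]
          refine Finset.sum_congr rfl (fun b _ => ?_)
          rw [← Finset.sum_smul]
          congr 1
          rw [← Matrix.mul_apply, hCC]
  have hKEYGEN : ∀ j l, col j ⊗ₜ[A] row l = C l j • ω := by
    intro j l
    apply hinj
    rw [map_smul, hincω]
    have h1 : inc (col j ⊗ₜ[A] row l) = (fun a => C a j) ⊗ₜ[A] (fun b => C l b) :=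
      TensorProduct.map_tmul _ _ _ _
    rw [h1, tensor_coords, Finset.smul_sum]
    refine Finset.sum_congr rfl (fun a _ => ?_)
    rw [Finset.smul_sum]
    refine Finset.sum_congr rfl (fun b _ => ?_)
    rw [smul_smul]
    congr 1
    linear_combination hsw a j l b
  have hspanP : ∀ x : ↥P, x = ∑ j, x.1 j • col j := by
    intro x
    apply Subtype.ext
    have hx : C.mulVec x.1 = x.1 := hfixP x.1 x.2
    have hco : ((∑ j, x.1 j • col j : ↥P) : ι → A) = ∑ j, x.1 j • (fun a => C a j) := by
      push_cast
      rfl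
    rw [hco]
    funext a
    rw [← congrFun hx a]
    simp [Matrix.mulVec, dotProduct, mul_comm]
  have hspanQ : ∀ y : ↥Q, y = ∑ l, y.1 l • row l := by
    intro y
    apply Subtype.ext
    have hy : C.transpose.mulVec y.1 = y.1 := hfixQ y.1 y.2
    have hco : ((∑ l, y.1 l • row l : ↥Q) : ι → A) = ∑ l, y.1 l • (fun b => C l b) := by
      push_cast
      rfl
    rw [hco]
    funext a
    rw [← congrFun hy a]
    simp [Matrix.mulVec, dotProduct, Matrix.transpose_apply, mul_comm]
  have hβω : β ω = 1 := by
    rw [hω, map_sum]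
    calc ∑ i, β (col i ⊗ₜ[A] row i) = ∑ i, ∑ a, C a i * C i a := by
          exact Finset.sum_congr rfl (fun i _ => hβ_tmul _ _)
      _ = ∑ a, ∑ i, C a i * C i a := Finset.sum_comm
      _ = ∑ a, C a a := by
          refine Finset.sum_congr rfl (fun a _ => ?_)
          rw [← Matrix.mul_apply, hCC]
      _ = 1 := htr
  have hD : (LinearMap.toSpanSingleton A _ ω).comp β = LinearMap.id := by
    apply TensorProduct.ext'
    intro x y
    rw [LinearMap.comp_apply, LinearMap.id_apply, LinearMap.toSpanSingleton_apply, hβ_tmul]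
    have hxfix : C.mulVec x.1 = x.1 := hfixP x.1 x.2
    have hmv : ∀ l, ∑ j, C l j * x.1 j = x.1 l := by
      intro l
      rw [← congrFun hxfix l]
      simp [Matrix.mulVec, dotProduct]
    conv_rhs => rw [hspanP x, hspanQ y]
    rw [sum_tmul]
    calc (∑ i, x.1 i * y.1 i) • ω
        = (∑ l, x.1 l * y.1 l) • ω := rfl
      _ = ∑ j, (x.1 j • col j) ⊗ₜ[A] (∑ l, y.1 l • row l) := ?_
    symm
    calc ∑ j, (x.1 j • col j) ⊗ₜ[A] (∑ l, y.1 l • row l)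
        = ∑ j, ∑ l, (x.1 j * (y.1 l * C l j)) • ω := by
          refine Finset.sum_congr rfl (fun j _ => ?_)
          rw [← smul_tmul', tmul_sum, Finset.smul_sum]
          refine Finset.sum_congr rfl (fun l _ => ?_)
          rw [tmul_smul, hKEYGEN j l, smul_smul, smul_smul, mul_assoc]
      _ = ∑ j, (∑ l, x.1 j * (y.1 l * C l j)) • ω := by
          refine Finset.sum_congr rfl (fun j _ => ?_)
          rw [Finset.sum_smul]
      _ = (∑ j, ∑ l, x.1 j * (y.1 l * C l j)) • ω := by rw [Finset.sum_smul]
      _ = (∑ l, x.1 l * y.1 l) • ω := by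
          congr 1
          rw [Finset.sum_comm]
          refine Finset.sum_congr rfl (fun l _ => ?_)
          calc ∑ j, x.1 j * (y.1 l * C l j) = y.1 l * ∑ j, C l j * x.1 j := by
                rw [Finset.mul_sum]
                exact Finset.sum_congr rfl (fun j _ => by ring)
            _ = y.1 l * x.1 l := by rw [hmv l]
            _ = x.1 l * y.1 l := mul_comm _ _
  refine ⟨LinearEquiv.ofLinear β (LinearMap.toSpanSingleton A _ ω) ?_ hD⟩
  refine LinearMap.ext fun s => ?_
  rw [LinearMap.comp_apply, LinearMap.toSpanSingleton_apply, map_smul, hβω, smul_eq_mul,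
    mul_one, LinearMap.id_apply]
end MatrixModule
section Adjoin
variable {R R' : Type} [CommRing R] [CommRing R'] [Algebra R R']

theorem adjoin_finset_integral (t : Finset R') (ht : ∀ x ∈ t, IsIntegral R x) :
    ∃ (A : Type) (_ : CommRing A) (_ : Algebra R A),
      Module.Finite R A ∧ Algebra.FinitePresentation R A ∧
      ∃ f : A →ₐ[R] R', ∀ x ∈ t, x ∈ Set.range f := by
  classical
  induction t using Finset.induction_on with
  | empty =>
      exact ⟨R, inferInstance, inferInstance, inferInstance, inferInstance,
        Algebra.ofId R R', by simp⟩
  | insert a s hnotmem ih =>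
      obtain ⟨A, _, _, hfin, hfp, f, hf⟩ := ih (fun x hx => ht x (Finset.mem_insert_of_mem hx))
      obtain ⟨q, hqmonic, hqa⟩ := ht a (Finset.mem_insert_self a s)
      letI : Algebra A R' := f.toRingHom.toAlgebra
      haveI : IsScalarTower R A R' := IsScalarTower.of_algebraMap_eq
        (fun x => (f.commutes x).symm)
      set q' : Polynomial A := q.map (algebraMap R A) with hq'
      have hq'monic : q'.Monic := hqmonic.map _
      set A' := AdjoinRoot q' with hA'
      haveI : Module.Finite A A' := Module.Finite.of_basis (AdjoinRoot.powerBasisAux' hq'monic)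
      haveI : Module.Finite R A' := Module.Finite.trans A A'
      haveI : Algebra.FinitePresentation A A' :=
        Algebra.FinitePresentation.quotient ⟨{q'}, by simp⟩
      haveI : Algebra.FinitePresentation R A' := Algebra.FinitePresentation.trans R A A'
      have hroot : (Polynomial.aeval a) q' = 0 := by
        rw [hq', Polynomial.aeval_map_algebraMap]
        -- aeval over A of (map q) at a equals aeval over R of q at a
        rw [Polynomial.aeval_def]
        exact hqa
      set g₀ : A' →ₐ[A] R' := AdjoinRoot.liftAlgHom q' (Algebra.ofId A R') a hroot with hg₀
      set g : A' →ₐ[R] R' := g₀.restrictScalars R with hg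
      refine ⟨A', inferInstance, inferInstance, inferInstance, inferInstance, g, ?_⟩
      intro x hx
      rcases Finset.mem_insert.mp hx with rfl | hxs
      · refine ⟨AdjoinRoot.root q', ?_⟩
        show g₀ (AdjoinRoot.root q') = _
        rw [hg₀]
        exact AdjoinRoot.liftAlgHom_root _ _ _ _
      · obtain ⟨y, hy⟩ := hf x hxs
        refine ⟨algebraMap A A' y, ?_⟩
        show g₀ (algebraMap A A' y) = x
        rw [g₀.commutes y]
        exact hy
end Adjoin

section Descent
variable {A S : Type} [CommRing A] [CommRing S] [Algebra A S]
variable {M N : Type} [AddCommGroup M] [AddCommGroup N] [Module S M] [Module S N]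
variable [Module A M] [IsScalarTower A S M]
variable {ι : Type} [Fintype ι] [DecidableEq ι]

theorem descent_equiv (φ : (M ⊗[S] N) ≃ₗ[S] S) (m : ι → M) (n : ι → N)
    (hu : φ.symm 1 = ∑ i, m i ⊗ₜ[S] n i)
    (C : Matrix ι ι A)
    (hC : ∀ i j, algebraMap A S (C i j) = φ (m j ⊗ₜ n i))
    (hCC : C * C = C)
    (hswap : ∀ (a c : M) (b d : N),
      φ (a ⊗ₜ d) * φ (c ⊗ₜ b) = φ (a ⊗ₜ b) * φ (c ⊗ₜ d))
    (hdb : ∀ m₀ : M, ∑ i, φ (m₀ ⊗ₜ n i) • m i = m₀) :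
    Nonempty (M ≃ₗ[S] (S ⊗[A] ↥(LinearMap.range C.mulVecLin))) := by
  classical
  haveI : SMulCommClass A S M := ⟨fun a s m => by
    rw [algebra_compatible_smul S a m, algebra_compatible_smul S a (s • m), smul_smul,
      smul_smul, mul_comm]⟩
  set P := LinearMap.range C.mulVecLin with hPdef
  have hdsum : ∑ i, φ (m i ⊗ₜ[S] n i) = 1 := by
    have h1 : φ (∑ i, m i ⊗ₜ[S] n i) = 1 := by rw [← hu]; exact φ.apply_symm_apply 1
    rwa [map_sum] at h1
  have hfixP : ∀ x : ι → A, x ∈ P → C.mulVec x = x := by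
    rintro x ⟨y, rfl⟩
    show C.mulVec (C.mulVecLin y) = _
    simp only [Matrix.mulVecLin_apply, Matrix.mulVec_mulVec, hCC]
  have hcolmem : ∀ j, (fun a => C a j) ∈ P := by
    intro j
    refine ⟨Pi.single j 1, ?_⟩
    funext a
    simp [Matrix.mulVecLin_apply, Matrix.mulVec, dotProduct, Pi.single_apply]
  set col : ι → ↥P := fun j => ⟨fun a => C a j, hcolmem j⟩ with hcol
  have hspanP : ∀ x : ↥P, x = ∑ j, x.1 j • col j := by
    intro x
    apply Subtype.ext
    have hx : C.mulVec x.1 = x.1 := hfixP x.1 x.2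
    have hco : ((∑ j, x.1 j • col j : ↥P) : ι → A) = ∑ j, x.1 j • (fun a => C a j) := by
      push_cast
      rfl
    rw [hco]
    funext a
    rw [← congrFun hx a]
    simp [Matrix.mulVec, dotProduct, mul_comm]
  -- the forward map
  set ν : ι → (S →ₗ[S] (S ⊗[A] ↥P)) := fun i =>
    { toFun := fun s => s ⊗ₜ[A] col i
      map_add' := fun s s' => add_tmul s s' _
      map_smul' := fun s s' => by simp [smul_tmul'] } with hν
  set μ : ι → (M →ₗ[S] S) := fun i =>
    φ.toLinearMap ∘ₗ ((TensorProduct.mk S M N).flip (n i)) with hμ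
  set g : M →ₗ[S] (S ⊗[A] ↥P) := ∑ i, (ν i) ∘ₗ (μ i) with hgdef
  have hg_apply : ∀ m₀ : M, g m₀ = ∑ i, φ (m₀ ⊗ₜ n i) ⊗ₜ[A] col i := by
    intro m₀
    rw [hgdef, LinearMap.sum_apply]
    rfl
  -- the backward map
  set inner : ↥P →ₗ[A] M :=
    { toFun := fun x => ∑ j, algebraMap A S (x.1 j) • m j
      map_add' := fun x x' => by
        simp [map_add, add_smul, Finset.sum_add_distrib]
      map_smul' := fun a x => by
        simp only [Submodule.coe_smul, Pi.smul_apply, smul_eq_mul, map_mul,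
          RingHom.id_apply, Finset.smul_sum]
        refine Finset.sum_congr rfl (fun j _ => ?_)
        rw [mul_smul, algebraMap_smul] } with hinner
  set h : (S ⊗[A] ↥P) →ₗ[S] M := TensorProduct.AlgebraTensorModule.lift
    { toFun := fun s => s • inner
      map_add' := fun s s' => by simp [add_smul]
      map_smul' := fun s s' => by simp [smul_smul] } with hh
  have hh_tmul : ∀ (s : S) (x : ↥P), h (s ⊗ₜ[A] x) = s • ∑ j, algebraMap A S (x.1 j) • m j := by
    intro s x
    rw [hh, TensorProduct.AlgebraTensorModule.lift_tmul]
    rfl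
  -- h ∘ g = id
  have hhg : ∀ m₀ : M, h (g m₀) = m₀ := by
    intro m₀
    rw [hg_apply, map_sum]
    calc ∑ i, h (φ (m₀ ⊗ₜ n i) ⊗ₜ[A] col i)
        = ∑ i, ∑ j, (φ (m₀ ⊗ₜ n i) * φ (m i ⊗ₜ n j)) • m j := by
          refine Finset.sum_congr rfl (fun i _ => ?_)
          rw [hh_tmul, Finset.smul_sum]
          refine Finset.sum_congr rfl (fun j _ => ?_)
          have : (col i).1 j = C j i := rfl
          rw [this, hC j i, smul_smul]
      _ = ∑ j, ∑ i, (φ (m₀ ⊗ₜ n j) * φ (m i ⊗ₜ n i)) • m j := by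
          rw [Finset.sum_comm]
          exact Finset.sum_congr rfl (fun j _ => Finset.sum_congr rfl
            (fun i _ => by rw [hswap m₀ (m i) (n j) (n i)]))
      _ = ∑ j, φ (m₀ ⊗ₜ n j) • m j := by
          refine Finset.sum_congr rfl (fun j _ => ?_)
          rw [← Finset.sum_smul, ← Finset.mul_sum, hdsum, mul_one]
      _ = m₀ := hdb m₀
  -- g ∘ h = id
  have hgh : ∀ (s : S) (x : ↥P), g (h (s ⊗ₜ[A] x)) = s ⊗ₜ[A] x := by
    intro s x
    have hmv : ∀ i, ∑ j, C i j * x.1 j = x.1 i := by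
      intro i
      have hx : C.mulVec x.1 = x.1 := hfixP x.1 x.2
      rw [← congrFun hx i]
      simp [Matrix.mulVec, dotProduct]
    rw [hh_tmul, map_smul, map_sum]
    calc s • ∑ j, g (algebraMap A S (x.1 j) • m j)
        = s • ∑ j, ∑ i, (1:S) ⊗ₜ[A] ((C i j * x.1 j) • col i) := by
          congr 1
          refine Finset.sum_congr rfl (fun j _ => ?_)
          rw [map_smul, hg_apply, Finset.smul_sum]
          refine Finset.sum_congr rfl (fun i _ => ?_)
          rw [← hC i j, smul_tmul', smul_eq_mul, ← map_mul, mul_comm (x.1 j) (C i j),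
            Algebra.algebraMap_eq_smul_one, smul_tmul]
      _ = s • ((1:S) ⊗ₜ[A] x) := by
          congr 1
          rw [Finset.sum_comm]
          calc ∑ i, ∑ j, (1:S) ⊗ₜ[A] ((C i j * x.1 j) • col i)
              = ∑ i, (1:S) ⊗ₜ[A] (x.1 i • col i) := by
                refine Finset.sum_congr rfl (fun i _ => ?_)
                rw [← tmul_sum, ← Finset.sum_smul, hmv]
              _ = (1:S) ⊗ₜ[A] x := by rw [← tmul_sum, ← hspanP x]
      _ = s ⊗ₜ[A] x := by rw [smul_tmul', smul_eq_mul, mul_one]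
  exact ⟨LinearEquiv.ofLinear g h (by
    apply TensorProduct.AlgebraTensorModule.ext
    intro s x
    rw [LinearMap.comp_apply, LinearMap.id_apply]
    exact hgh s x) (by
    refine LinearMap.ext fun m₀ => ?_
    rw [LinearMap.comp_apply, LinearMap.id_apply]
    exact hhg m₀)⟩
end Descent

section PiTensor

noncomputable def finSuccTensor (S MM : Type) [CommRing S] [AddCommGroup MM] [Module S MM]
    (n : ℕ) : (⨂[S] _ : Fin (n+1), MM) ≃ₗ[S] ((⨂[S] _ : Fin n, MM) ⊗[S] MM) :=
  ((PiTensorProduct.reindex S (fun _ : Fin (n+1) => MM) finSumFinEquiv.symm).trans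
    (PiTensorProduct.tmulEquiv S MM).symm).trans
    (TensorProduct.congr (LinearEquiv.refl S _) (PiTensorProduct.subsingletonEquiv (0 : Fin 1)))

theorem pitensor_basechange {A S : Type} [CommRing A] [CommRing S] [Algebra A S]
    {Q MM : Type} [AddCommGroup Q] [Module A Q] [AddCommGroup MM] [Module S MM]
    (e : (S ⊗[A] Q) ≃ₗ[S] MM) :
    ∀ n : ℕ, Nonempty ((S ⊗[A] (⨂[A] _ : Fin n, Q)) ≃ₗ[S] (⨂[S] _ : Fin n, MM)) := by
  intro n
  induction n with
  | zero =>
      refine ⟨?_⟩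
      exact (TensorProduct.AlgebraTensorModule.congr (LinearEquiv.refl S S)
          (PiTensorProduct.isEmptyEquiv (Fin 0))).trans
        ((TensorProduct.AlgebraTensorModule.rid A S S).trans
          (PiTensorProduct.isEmptyEquiv (Fin 0)).symm)
  | succ n ih =>
      obtain ⟨ihe⟩ := ih
      refine ⟨?_⟩
      have e1 : (S ⊗[A] (⨂[A] _ : Fin (n+1), Q)) ≃ₗ[S]
          (S ⊗[A] ((⨂[A] _ : Fin n, Q) ⊗[A] Q)) :=
        TensorProduct.AlgebraTensorModule.congr (LinearEquiv.refl S S) (finSuccTensor A Q n)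
      have e2 : (S ⊗[A] ((⨂[A] _ : Fin n, Q) ⊗[A] Q)) ≃ₗ[S]
          ((S ⊗[A] (⨂[A] _ : Fin n, Q)) ⊗[A] Q) :=
        (TensorProduct.AlgebraTensorModule.assoc A A S S (⨂[A] _ : Fin n, Q) Q).symm
      have e3 : ((S ⊗[A] (⨂[A] _ : Fin n, Q)) ⊗[A] Q) ≃ₗ[S]
          ((⨂[S] _ : Fin n, MM) ⊗[A] Q) :=
        TensorProduct.AlgebraTensorModule.congr ihe (LinearEquiv.refl A Q)
      have e4 : ((⨂[S] _ : Fin n, MM) ⊗[A] Q) ≃ₗ[S]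
          ((⨂[S] _ : Fin n, MM) ⊗[S] (S ⊗[A] Q)) :=
        (TensorProduct.AlgebraTensorModule.cancelBaseChange A S S (⨂[S] _ : Fin n, MM) Q).symm
      have e5 : ((⨂[S] _ : Fin n, MM) ⊗[S] (S ⊗[A] Q)) ≃ₗ[S]
          ((⨂[S] _ : Fin n, MM) ⊗[S] MM) :=
        TensorProduct.congr (LinearEquiv.refl S _) e
      exact ((((e1.trans e2).trans e3).trans e4).trans e5).trans (finSuccTensor S MM n).symm

end PiTensor


/-- If Pic(R') is torsion for every finite and finitely presented R-algebra
R', then Pic(R') is torsion for every R-algebra R' integral over R. -/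
theorem picTorsion_integral_of_picTorsion_finite (R : Type) [CommRing R]
    (hP : ∀ (R' : Type) [CommRing R'] [Algebra R R'],
      Module.Finite R R' → Algebra.FinitePresentation R R' → PicIsTorsion R') :
    ∀ (R' : Type) [CommRing R'] [Algebra R R'], Algebra.IsIntegral R R' → PicIsTorsion R' := by
  intro R' _ _ hint M _ _ hM
  classical
  obtain ⟨hMfin, hMproj, N, _, _, ⟨φ⟩⟩ := hM
  -- decompose the unit
  obtain ⟨T, hT⟩ := TensorProduct.exists_finset (φ.symm 1)
  set ι : Type := {x // x ∈ T} with hι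
  letI : DecidableEq ι := Classical.decEq _
  set m : ι → M := fun i => i.1.1 with hm
  set n : ι → N := fun i => i.1.2 with hn
  have hu : φ.symm 1 = ∑ i : ι, m i ⊗ₜ[R'] n i := by
    rw [hT, ← Finset.sum_coe_sort T (fun p => p.1 ⊗ₜ[R'] p.2)]
  -- scalar matrix over R'
  set c : ι → ι → R' := fun i j => φ (m j ⊗ₜ n i) with hc
  have hswap := key_swap φ m n hu
  have hdb := dual_basis φ m n hu hswap (fun z => tmul_eq_smul_inv φ z)
  have hdsum : ∑ i : ι, φ (m i ⊗ₜ[R'] n i) = 1 := by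
    have h1 : φ (∑ i : ι, m i ⊗ₜ[R'] n i) = 1 := by
      rw [← hu]; exact φ.apply_symm_apply 1
    rwa [map_sum] at h1
  -- a finite finitely presented algebra covering the entries
  obtain ⟨A, _, _, hAfin, hAfp, f, hf⟩ := adjoin_finset_integral
    (Finset.image (fun p : ι × ι => c p.1 p.2) Finset.univ)
    (fun x _ => Algebra.IsIntegral.isIntegral (R := R) x)
  have hlift : ∀ p : ι × ι, ∃ a : A, f a = c p.1 p.2 := by
    intro p
    exact hf _ (Finset.mem_image_of_mem _ (Finset.mem_univ p))
  choose C₀ hC₀ using hlift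
  -- relations
  set rel1 : A := (∑ i : ι, C₀ (i, i)) - 1 with hrel1
  set rel2 : ι × ι × ι × ι → A := fun q =>
    C₀ (q.1, q.2.1) * C₀ (q.2.2.1, q.2.2.2) - C₀ (q.1, q.2.2.2) * C₀ (q.2.2.1, q.2.1) with hrel2
  set relSet : Set A := insert rel1 (Set.range rel2) with hrelSet
  have hrelfin : relSet.Finite := (Set.finite_range rel2).insert rel1
  set I : Ideal A := Ideal.span relSet with hI
  have hIfg : I.FG := Submodule.fg_span hrelfin
  -- the relations map to zero in R'
  have hrel0 : ∀ a ∈ I, f a = 0 := by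
    have hsub : relSet ⊆ (RingHom.ker f.toRingHom : Set A) := by
      intro a ha
      rcases ha with rfl | ⟨q, rfl⟩
      · show f rel1 = 0
        rw [hrel1, map_sub, map_sum, map_one]
        have : ∑ i : ι, f (C₀ (i, i)) = 1 := by
          calc ∑ i : ι, f (C₀ (i, i)) = ∑ i : ι, c i i :=
                Finset.sum_congr rfl (fun i _ => hC₀ (i, i))
            _ = 1 := hdsum
        rw [this, sub_self]
      · show f (rel2 q) = 0
        rw [hrel2]
        simp only [map_sub, map_mul, hC₀]
        have := hswap (m q.2.1) (m q.2.2.2) (n q.2.2.1) (n q.1)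
        simp only [hc]
        linear_combination this
    intro a ha
    have : I ≤ RingHom.ker f.toRingHom := Ideal.span_le.mpr hsub
    exact this ha
  -- the quotient algebra
  set A₂ : Type := A ⧸ I with hA₂
  haveI : Module.Finite R A₂ :=
    Module.Finite.of_surjective (Ideal.Quotient.mkₐ R I).toLinearMap
      (Ideal.Quotient.mkₐ_surjective R I)
  haveI : Algebra.FinitePresentation R A₂ := Algebra.FinitePresentation.quotient hIfg
  set f₂ : A₂ →ₐ[R] R' := Ideal.Quotient.liftₐ I f hrel0 with hf₂
  set CM : Matrix ι ι A₂ := Matrix.of (fun i j => Ideal.Quotient.mk I (C₀ (i, j))) with hCM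
  have hf₂C : ∀ i j, f₂ (CM i j) = c i j := by
    intro i j
    show f₂ (Ideal.Quotient.mk I (C₀ (i, j))) = c i j
    rw [hf₂, Ideal.Quotient.liftₐ_apply]
    exact hC₀ (i, j)
  have htr : ∑ i, CM i i = 1 := by
    have : (Ideal.Quotient.mk I) rel1 = 0 := Ideal.Quotient.eq_zero_iff_mem.mpr
      (Ideal.subset_span (Set.mem_insert _ _))
    rw [hrel1, map_sub, map_sum, map_one, sub_eq_zero] at this
    exact this
  have hsw : ∀ i j k l, CM i j * CM k l = CM i l * CM k j := by
    intro i j k l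
    have : (Ideal.Quotient.mk I) (rel2 (i, j, k, l)) = 0 := Ideal.Quotient.eq_zero_iff_mem.mpr
      (Ideal.subset_span (Set.mem_insert_of_mem _ ⟨(i, j, k, l), rfl⟩))
    rw [hrel2, map_sub, map_mul, map_mul, sub_eq_zero] at this
    exact this
  have hCC : CM * CM = CM := by
    ext i j
    rw [Matrix.mul_apply]
    calc ∑ k, CM i k * CM k j = ∑ k, CM i j * CM k k :=
          Finset.sum_congr rfl (fun k _ => hsw i k k j)
      _ = CM i j := by rw [← Finset.mul_sum, htr, mul_one]
  -- invertible module over A₂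
  obtain ⟨hP₂fin, hP₂proj, ⟨β⟩⟩ := matrix_invertible CM htr hsw
  have hinv : IsInvertibleModule A₂ ↥(LinearMap.range CM.mulVecLin) :=
    ⟨hP₂fin, hP₂proj, ↥(LinearMap.range CM.transpose.mulVecLin), inferInstance, inferInstance, ⟨β⟩⟩
  obtain ⟨k, hk, ⟨ψ⟩⟩ := hP A₂ ‹Module.Finite R A₂› ‹Algebra.FinitePresentation R A₂›
    ↥(LinearMap.range CM.mulVecLin) inferInstance inferInstance hinv
  -- base change back to R'
  letI : Algebra A₂ R' := f₂.toRingHom.toAlgebra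
  letI : Module A₂ M := Module.compHom M (algebraMap A₂ R')
  haveI : IsScalarTower A₂ R' M := ⟨fun a s mm => by
    change ((algebraMap A₂ R') a * s) • mm = (algebraMap A₂ R') a • (s • mm)
    rw [mul_smul]⟩
  have halg : ∀ i j, algebraMap A₂ R' (CM i j) = φ (m j ⊗ₜ n i) := fun i j => hf₂C i j
  obtain ⟨e1⟩ := descent_equiv φ m n hu CM halg hCC hswap hdb
  obtain ⟨E⟩ := pitensor_basechange (e1.symm) k
  refine ⟨k, hk, ⟨?_⟩⟩
  exact E.symm.trans ((TensorProduct.AlgebraTensorModule.congr (LinearEquiv.refl R' R') ψ).trans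
    (TensorProduct.AlgebraTensorModule.rid A₂ R' R'))
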